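/- arXiv:2103.00631 — 2 statements merged into one kernel-verified Lean document; each statement's English description precedes it below -/
import Mathlib

section
/- Let h be a symmetric kernel of order k with E[h²] < ∞ applied to i.i.d. Z_1,...,Z_N (k ≤ N). For 1 ≤ c ≤ k define ζ_c = Cov(h(Z_1,...,Z_c,Z_{c+1},...,Z_k), h(Z_1,...,Z_c,Z'_{c+1},...,Z'_k)), where Z' variables are independent copies. Then the variance of the complete U-statistic U = C(N,k)^{-1} Σ_{|s|=k} h(Z_s) equals Var(U) = Σ_{c=1}^{k} [C(k,c)·C(N−k,k−c)/C(N,k)] · ζ_c. -/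
open MeasureTheory ProbabilityTheory Filter Topology

/-- Covariance of two real random variables. -/
noncomputable def cov {Ω : Type*} [MeasurableSpace Ω] (P : Measure Ω) (X Y : Ω → ℝ) : ℝ :=
  ∫ ω, X ω * Y ω ∂P - (∫ ω, X ω ∂P) * (∫ ω, Y ω ∂P)

/-- Evaluation of a symmetric order-`k` kernel `h` on the data indexed by a size-`k`
subset `A` of `{0,…,N-1}` (the order of the arguments is irrelevant by symmetry). -/
noncomputable def kernelOn {Ω : Type*} {N k : ℕ} (h : (Fin k → ℝ) → ℝ)
    (Z : ℕ → Ω → ℝ) (A : Finset (Fin N)) (ω : Ω) : ℝ :=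
  if hA : A.card = k then h (fun j => Z (A.orderEmbOfFin hA j : ℕ) ω) else 0

section Aux

variable {Ω : Type*} [MeasurableSpace Ω] {P : Measure Ω} [IsProbabilityMeasure P]
  {Z : ℕ → Ω → ℝ}

/-- joint law of finitely many coordinates of an iid sequence is the product measure -/
lemma law_pi (hmeas : ∀ i, Measurable (Z i))
    (hiid : iIndepFun Z P)
    (hident : ∀ i j, IdentDistrib (Z i) (Z j) P P)
    {m : ℕ} (ι : Fin m → ℕ) (hι : Function.Injective ι) :
    P.map (fun ω (j : Fin m) => Z (ι j) ω) = Measure.pi (fun _ => P.map (Z 0)) := by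
  classical
  haveI : ∀ j : Fin m, IsProbabilityMeasure ((fun _ : Fin m => P.map (Z 0)) j) :=
    fun j => Measure.isProbabilityMeasure_map (hmeas 0).aemeasurable
  refine (Measure.pi_eq fun s hs => ?_).symm
  have hv : Measurable (fun ω (j : Fin m) => Z (ι j) ω) :=
    measurable_pi_lambda _ fun j => hmeas (ι j)
  rw [Measure.map_apply hv (MeasurableSet.univ_pi hs)]
  have hpre : (fun ω (j : Fin m) => Z (ι j) ω) ⁻¹' Set.pi Set.univ s
      = ⋂ j : Fin m, Z (ι j) ⁻¹' s j := by
    ext ω; simp [Set.mem_pi]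
  rw [hpre]
  -- define sets on ℕ
  set sets : ℕ → Set ℝ := fun n => ⋂ (j : Fin m) (_ : ι j = n), s j with hsets
  have hsets_apply : ∀ j : Fin m, sets (ι j) = s j := by
    intro j
    ext x
    simp only [hsets, Set.mem_iInter]
    exact ⟨fun H => H j rfl, fun hx j' hj' => by rw [hι hj']; exact hx⟩
  have hsets_meas : ∀ n, MeasurableSet (sets n) := fun n =>
    MeasurableSet.iInter fun j => MeasurableSet.iInter fun _ => hs j
  have h1 : (⋂ j : Fin m, Z (ι j) ⁻¹' s j)
      = ⋂ i ∈ Finset.image ι Finset.univ, Z i ⁻¹' sets i := by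
    ext ω
    simp only [Set.mem_iInter, Finset.mem_image, Finset.mem_univ, true_and]
    constructor
    · rintro H i ⟨j, rfl⟩
      rw [hsets_apply]; exact H j
    · intro H j
      have := H (ι j) ⟨j, rfl⟩
      rwa [hsets_apply] at this
  rw [h1, hiid.measure_inter_preimage_eq_mul _ (fun i _ => hsets_meas i),
    Finset.prod_image (fun a _ b _ hab => hι hab)]
  refine Finset.prod_congr rfl fun j _ => ?_
  rw [hsets_apply, Measure.map_apply (hmeas 0) (hs j)]
  exact (hident (ι j) 0).measure_mem_eq (hs j)

lemma identDistrib_vec (hmeas : ∀ i, Measurable (Z i))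
    (hiid : iIndepFun Z P)
    (hident : ∀ i j, IdentDistrib (Z i) (Z j) P P)
    {m : ℕ} {ι ι' : Fin m → ℕ} (hι : Function.Injective ι) (hι' : Function.Injective ι') :
    IdentDistrib (fun ω (j : Fin m) => Z (ι j) ω) (fun ω (j : Fin m) => Z (ι' j) ω) P P :=
  ⟨(measurable_pi_lambda _ fun j => hmeas (ι j)).aemeasurable,
   (measurable_pi_lambda _ fun j => hmeas (ι' j)).aemeasurable,
   by rw [law_pi hmeas hiid hident ι hι, law_pi hmeas hiid hident ι' hι']⟩

/-- covariance only depends on the pattern of indices -/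
lemma cov_transfer (hmeas : ∀ i, Measurable (Z i))
    (hiid : iIndepFun Z P)
    (hident : ∀ i j, IdentDistrib (Z i) (Z j) P P)
    {m : ℕ} {ι ι' : Fin m → ℕ} (hι : Function.Injective ι) (hι' : Function.Injective ι')
    {F G : (Fin m → ℝ) → ℝ} (hF : Measurable F) (hG : Measurable G) :
    cov P (fun ω => F (fun j => Z (ι j) ω)) (fun ω => G (fun j => Z (ι j) ω))
      = cov P (fun ω => F (fun j => Z (ι' j) ω)) (fun ω => G (fun j => Z (ι' j) ω)) := by
  have hvec := identDistrib_vec hmeas hiid hident hι hι'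
  have h1 := (hvec.comp (hF.mul hG)).integral_eq
  have h2 := (hvec.comp hF).integral_eq
  have h3 := (hvec.comp hG).integral_eq
  simp only [Function.comp, Pi.mul_apply] at h1 h2 h3
  simp only [cov, h1, h2, h3]

end Aux

section Aux2

variable {Ω : Type*} [MeasurableSpace Ω] {P : Measure Ω} [IsProbabilityMeasure P]
  {Z : ℕ → Ω → ℝ} {k : ℕ} {h : (Fin k → ℝ) → ℝ}

/-- kernelOn can be computed with any enumeration of `A`, by symmetry -/
lemma kernelOn_enum {N : ℕ}
    (hsymm : ∀ (σ : Equiv.Perm (Fin k)) (x : Fin k → ℝ), h (x ∘ σ) = h x)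
    (A : Finset (Fin N)) (hA : A.card = k) (a : Fin k → Fin N)
    (ha : ∀ j, a j ∈ A) (hainj : Function.Injective a) (ω : Ω) :
    kernelOn h Z A ω = h (fun j => Z ((a j : Fin N) : ℕ) ω) := by
  rw [kernelOn, dif_pos hA]
  set iso := A.orderIsoOfFin hA with hiso
  set g : Fin k → Fin k := fun j => iso.symm ⟨a j, ha j⟩ with hg
  have hginj : Function.Injective g := by
    intro x y hxy
    have h2 : (⟨a x, ha x⟩ : {z // z ∈ A}) = ⟨a y, ha y⟩ := by
      simpa [hg] using congrArg iso hxy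
    exact hainj (congrArg Subtype.val h2)
  have hgb : Function.Bijective g := (Finite.injective_iff_bijective).1 hginj
  set σ : Equiv.Perm (Fin k) := Equiv.ofBijective g hgb with hσ
  have key : ∀ j, (A.orderEmbOfFin hA (σ j) : Fin N) = a j := by
    intro j
    have : A.orderEmbOfFin hA (g j) = (iso (g j) : Fin N) := rfl
    simp only [hσ, Equiv.ofBijective_apply, this, hg, OrderIso.apply_symm_apply]
    exact congrArg Subtype.val (iso.apply_symm_apply ⟨a j, ha j⟩)
  calc h (fun j => Z ((A.orderEmbOfFin hA j : Fin N) : ℕ) ω)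
      = h ((fun j => Z ((A.orderEmbOfFin hA j : Fin N) : ℕ) ω) ∘ σ) := (hsymm σ _).symm
    _ = h (fun j => Z ((a j : Fin N) : ℕ) ω) := by
        congr 1; funext j; simp only [Function.comp_apply, key]

/-- the central lemma: covariance of two kernel evaluations depends only on the
intersection cardinality. -/
lemma cov_kernel {N : ℕ}
    (hmeas : ∀ i, Measurable (Z i))
    (hiid : iIndepFun Z P)
    (hident : ∀ i j, IdentDistrib (Z i) (Z j) P P)
    (hhmeas : Measurable h)
    (hsymm : ∀ (σ : Equiv.Perm (Fin k)) (x : Fin k → ℝ), h (x ∘ σ) = h x)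
    (A B : Finset (Fin N)) (hA : A.card = k) (hB : B.card = k) :
    cov P (kernelOn h Z A) (kernelOn h Z B)
      = cov P (fun ω => h (fun j => Z (j : ℕ) ω))
          (fun ω => h (fun j => if (j : ℕ) < (A ∩ B).card then Z (j : ℕ) ω
            else Z (k + (j : ℕ)) ω)) := by
  classical
  set c := (A ∩ B).card with hc
  have hck : c ≤ k := hA ▸ Finset.card_le_card Finset.inter_subset_left
  set m := 2 * k - c with hm
  have hkm : k ≤ m := by omega
  have h_AB : (A \ B).card = k - c := by
    have := Finset.card_sdiff_add_card_inter A B; omega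
  have h_BA : (B \ A).card = k - c := by
    have h1 := Finset.card_sdiff_add_card_inter B A
    have h2 : (B ∩ A).card = c := by rw [Finset.inter_comm]
    omega
  set eI := (A ∩ B).orderEmbOfFin hc.symm with heI
  set eA := (A \ B).orderEmbOfFin h_AB with heA
  set eB := (B \ A).orderEmbOfFin h_BA with heB
  -- the actual index pattern
  set u : Fin m → ℕ := fun i =>
    if hi : (i : ℕ) < c then (eI ⟨i, hi⟩ : ℕ)
    else if hi2 : (i : ℕ) < k then (eA ⟨(i : ℕ) - c, by omega⟩ : ℕ)
    else (eB ⟨(i : ℕ) - k, by omega⟩ : ℕ) with hu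
  -- the canonical index pattern
  set u0 : Fin m → ℕ := fun i => if (i : ℕ) < k then (i : ℕ) else c + i with hu0
  set e : Fin k → Fin m := fun j => ⟨j, by omega⟩ with he
  set f : Fin k → Fin m := fun j =>
    if (j : ℕ) < c then ⟨j, by omega⟩ else ⟨k - c + j, by omega⟩ with hf
  have memI : ∀ x, eI x ∈ A ∩ B := fun x => Finset.orderEmbOfFin_mem _ _ x
  have memA : ∀ x, eA x ∈ A \ B := fun x => Finset.orderEmbOfFin_mem _ _ x
  have memB : ∀ x, eB x ∈ B \ A := fun x => Finset.orderEmbOfFin_mem _ _ x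
  have hIA : ∀ x y, (eI x : Fin N) ≠ eA y := by
    intro x y hxy
    have m1 := memI x; have m2 := memA y
    rw [hxy] at m1
    simp only [Finset.mem_inter, Finset.mem_sdiff] at m1 m2
    tauto
  have hIB : ∀ x y, (eI x : Fin N) ≠ eB y := by
    intro x y hxy
    have m1 := memI x; have m2 := memB y
    rw [hxy] at m1
    simp only [Finset.mem_inter, Finset.mem_sdiff] at m1 m2
    tauto
  have hAB : ∀ x y, (eA x : Fin N) ≠ eB y := by
    intro x y hxy
    have m1 := memA x; have m2 := memB y
    rw [hxy] at m1
    simp only [Finset.mem_sdiff] at m1 m2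
    tauto
  have eI_inj : ∀ x y : Fin c, (eI x : Fin N) = eI y → (x : ℕ) = (y : ℕ) :=
    fun x y hxy => congrArg Fin.val (eI.injective hxy)
  have eA_inj : ∀ x y : Fin (k - c), (eA x : Fin N) = eA y → (x : ℕ) = (y : ℕ) :=
    fun x y hxy => congrArg Fin.val (eA.injective hxy)
  have eB_inj : ∀ x y : Fin (k - c), (eB x : Fin N) = eB y → (x : ℕ) = (y : ℕ) :=
    fun x y hxy => congrArg Fin.val (eB.injective hxy)
  have hu_inj : Function.Injective u := by
    intro i i' heq
    simp only [hu] at heq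
    split_ifs at heq with h1 h2 h3 h4 h5 h6 h7 h8 h9
    · exact Fin.ext (by have hxy := eI_inj _ _ (Fin.val_injective heq); simp at hxy; omega)
    · exact absurd (Fin.val_injective heq) (hIA _ _)
    · exact absurd (Fin.val_injective heq) (hIB _ _)
    · exact absurd (Fin.val_injective heq).symm (hIA _ _)
    · exact Fin.ext (by have hxy := eA_inj _ _ (Fin.val_injective heq); simp at hxy; omega)
    · exact absurd (Fin.val_injective heq) (hAB _ _)
    · exact absurd (Fin.val_injective heq).symm (hIB _ _)
    · exact absurd (Fin.val_injective heq).symm (hAB _ _)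
    · exact Fin.ext (by have hxy := eB_inj _ _ (Fin.val_injective heq); simp at hxy; omega)
  have hu0_inj : Function.Injective u0 := by
    intro i i' heq
    simp only [hu0] at heq
    split_ifs at heq <;> exact Fin.ext (by omega)
  -- enumeration of A
  set a : Fin k → Fin N := fun j =>
    if hj : (j : ℕ) < c then eI ⟨j, hj⟩ else eA ⟨(j : ℕ) - c, by omega⟩ with ha
  set b : Fin k → Fin N := fun j =>
    if hj : (j : ℕ) < c then eI ⟨j, hj⟩ else eB ⟨(j : ℕ) - c, by omega⟩ with hb
  have haval : ∀ j, ((a j : Fin N) : ℕ) = u (e j) := by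
    intro j
    by_cases hj : (j : ℕ) < c
    · simp [ha, hu, he, hj]
    · simp [ha, hu, he, hj, j.isLt]
  have hbval : ∀ j, ((b j : Fin N) : ℕ) = u (f j) := by
    intro j
    by_cases hj : (j : ℕ) < c
    · simp [hb, hu, hf, hj]
    · have h1 : ¬ (k - c + (j : ℕ) < c) := by omega
      have h2 : ¬ (k - c + (j : ℕ) < k) := by omega
      simp only [hb, hu, hf, hj, if_false, dif_neg h1, dif_neg h2, dif_neg hj]
      exact congrArg (fun t : Fin (k - c) => ((eB t : Fin N) : ℕ)) (Fin.ext (by simp; omega))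
  have hamem : ∀ j, a j ∈ A := by
    intro j; simp only [ha]; split_ifs with hj
    · exact (Finset.mem_inter.1 (memI _)).1
    · exact (Finset.mem_sdiff.1 (memA _)).1
  have hbmem : ∀ j, b j ∈ B := by
    intro j; simp only [hb]; split_ifs with hj
    · exact (Finset.mem_inter.1 (memI _)).2
    · exact (Finset.mem_sdiff.1 (memB _)).1
  have hainj : Function.Injective a := by
    intro x y hxy
    have h0 : u (e x) = u (e y) := by rw [← haval, ← haval, hxy]
    have h1 := hu_inj h0
    simp only [he, Fin.mk.injEq] at h1
    exact Fin.ext h1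
  have hbinj : Function.Injective b := by
    intro x y hxy
    have h0 : u (f x) = u (f y) := by rw [← hbval, ← hbval, hxy]
    have h1 := hu_inj h0
    simp only [hf] at h1
    split_ifs at h1 with hx hy hy <;>
      (simp only [Fin.mk.injEq] at h1; exact Fin.ext (by omega))
  set F : (Fin m → ℝ) → ℝ := fun x => h (fun j => x (e j)) with hF
  set G : (Fin m → ℝ) → ℝ := fun x => h (fun j => x (f j)) with hG
  have hFmeas : Measurable F :=
    hhmeas.comp (measurable_pi_lambda _ fun j => measurable_pi_apply _)
  have hGmeas : Measurable G :=
    hhmeas.comp (measurable_pi_lambda _ fun j => measurable_pi_apply _)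
  have e1 : kernelOn h Z A = fun ω => F (fun j => Z (u j) ω) := by
    funext ω
    rw [kernelOn_enum hsymm A hA a hamem hainj ω]
    simp only [hF]
    congr 1; funext j; rw [haval]
  have e2 : kernelOn h Z B = fun ω => G (fun j => Z (u j) ω) := by
    funext ω
    rw [kernelOn_enum hsymm B hB b hbmem hbinj ω]
    simp only [hG]
    congr 1; funext j; rw [hbval]
  have e3 : (fun ω => F (fun j => Z (u0 j) ω)) = fun ω => h (fun j => Z (j : ℕ) ω) := by
    funext ω
    simp only [hF]
    congr 1; funext j
    simp [hu0, he, j.isLt]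
  have e4 : (fun ω => G (fun j => Z (u0 j) ω))
      = fun ω => h (fun j => if (j : ℕ) < c then Z (j : ℕ) ω else Z (k + (j : ℕ)) ω) := by
    funext ω
    simp only [hG]
    congr 1; funext j
    by_cases hj : (j : ℕ) < c
    · simp [hu0, hf, hj, show (j : ℕ) < k by omega]
    · have h2 : ¬ (k - c + (j : ℕ) < k) := by omega
      simp only [hu0, hf, hj, if_false, if_neg h2]
      have hq : c + (k - c + (j : ℕ)) = k + (j : ℕ) := by omega
      rw [hq]
  rw [e1, e2, cov_transfer hmeas hiid hident hu_inj hu0_inj hFmeas hGmeas, e3, e4]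

lemma memL2_kernelOn {N : ℕ}
    (hmeas : ∀ i, Measurable (Z i))
    (hiid : iIndepFun Z P)
    (hident : ∀ i j, IdentDistrib (Z i) (Z j) P P)
    (hhmeas : Measurable h)
    (hL2 : MemLp (fun ω => h (fun j => Z ((j : Fin k) : ℕ) ω)) 2 P)
    (A : Finset (Fin N)) (hA : A.card = k) :
    MemLp (kernelOn h Z A) 2 P := by
  have hinj : Function.Injective (fun j : Fin k => ((A.orderEmbOfFin hA j : Fin N) : ℕ)) :=
    fun x y hxy => (A.orderEmbOfFin hA).injective (Fin.val_injective hxy)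
  have hinj0 : Function.Injective (fun j : Fin k => (j : ℕ)) := fun x y => Fin.ext
  have hid := (identDistrib_vec hmeas hiid hident hinj0 hinj).comp hhmeas
  have heq : kernelOn h Z A
      = fun ω => h (fun j => ((A.orderEmbOfFin hA j : Fin N) : ℕ) |> Z |>.comp id ω) := by
    funext ω; rw [kernelOn, dif_pos hA]; rfl
  rw [heq]
  exact hid.memLp_snd hL2

lemma cov_disjoint_zero
    (hmeas : ∀ i, Measurable (Z i))
    (hiid : iIndepFun Z P)
    (hhmeas : Measurable h) :
    cov P (fun ω => h (fun j => Z ((j : Fin k) : ℕ) ω))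
      (fun ω => h (fun j => Z (k + ((j : Fin k) : ℕ)) ω)) = 0 := by
  classical
  set S : Finset ℕ := Finset.image (fun j : Fin k => (j : ℕ)) Finset.univ with hS
  set T : Finset ℕ := Finset.image (fun j : Fin k => k + (j : ℕ)) Finset.univ with hT
  have hST : Disjoint S T := by
    rw [Finset.disjoint_left]
    rintro x hx hx'
    simp only [hS, hT, Finset.mem_image, Finset.mem_univ, true_and] at hx hx'
    obtain ⟨a, rfl⟩ := hx
    obtain ⟨b, hb⟩ := hx'
    have := a.isLt
    omega
  have hind := hiid.indepFun_finset S T hST hmeas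
  have hmemS : ∀ j : Fin k, ((j : ℕ) : ℕ) ∈ S := by
    intro j; simp [hS]
  have hmemT : ∀ j : Fin k, k + (j : ℕ) ∈ T := by
    intro j; simp [hT]
  set φS : ((i : S) → ℝ) → ℝ := fun v => h (fun j => v ⟨(j : ℕ), hmemS j⟩) with hφS
  set φT : ((i : T) → ℝ) → ℝ := fun v => h (fun j => v ⟨k + (j : ℕ), hmemT j⟩) with hφT
  have hφSm : Measurable φS :=
    hhmeas.comp (measurable_pi_lambda _ fun j => measurable_pi_apply _)
  have hφTm : Measurable φT :=
    hhmeas.comp (measurable_pi_lambda _ fun j => measurable_pi_apply _)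
  have hXY : IndepFun (fun ω => h (fun j => Z ((j : Fin k) : ℕ) ω))
      (fun ω => h (fun j => Z (k + ((j : Fin k) : ℕ)) ω)) P := hind.comp hφSm hφTm
  have hmX : AEStronglyMeasurable (fun ω => h (fun j => Z ((j : Fin k) : ℕ) ω)) P :=
    (hhmeas.comp (measurable_pi_lambda _ fun j => hmeas _)).aestronglyMeasurable
  have hmY : AEStronglyMeasurable (fun ω => h (fun j => Z (k + ((j : Fin k) : ℕ)) ω)) P :=
    (hhmeas.comp (measurable_pi_lambda _ fun j => hmeas _)).aestronglyMeasurable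
  have hmul := hXY.integral_mul_eq_mul_integral hmX hmY
  rw [cov, sub_eq_zero]
  exact hmul

lemma count_inter {N : ℕ} (A : Finset (Fin N)) {k : ℕ} (hA : A.card = k) (c : ℕ) (hck : c ≤ k) :
    ((Finset.powersetCard k (Finset.univ : Finset (Fin N))).filter
        (fun B => (A ∩ B).card = c)).card = k.choose c * (N - k).choose (k - c) := by
  classical
  have key : ((Finset.powersetCard k (Finset.univ : Finset (Fin N))).filter
        (fun B => (A ∩ B).card = c)).card
      = ((Finset.powersetCard c A) ×ˢ (Finset.powersetCard (k - c) Aᶜ)).card := by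
    apply Finset.card_bij' (fun B _ => (A ∩ B, B \ A)) (fun p _ => p.1 ∪ p.2)
    · intro B hB
      simp only [Finset.mem_filter, Finset.mem_powersetCard] at hB
      obtain ⟨⟨-, hBk⟩, hBc⟩ := hB
      simp only [Finset.mem_product, Finset.mem_powersetCard]
      refine ⟨⟨Finset.inter_subset_left, hBc⟩, ?_, ?_⟩
      · intro x hx
        simp only [Finset.mem_sdiff] at hx
        simp [Finset.mem_compl, hx.2]
      · have h1 := Finset.card_sdiff_add_card_inter B A
        have h2 : (B ∩ A).card = c := by rw [Finset.inter_comm]; exact hBc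
        omega
    · intro p hp
      simp only [Finset.mem_product, Finset.mem_powersetCard] at hp
      obtain ⟨⟨hp1, hp1c⟩, hp2, hp2c⟩ := hp
      have hdisj : Disjoint p.1 p.2 := by
        rw [Finset.disjoint_left]
        intro x hx hx'
        exact absurd (hp1 hx) (Finset.mem_compl.1 (hp2 hx'))
      simp only [Finset.mem_filter, Finset.mem_powersetCard]
      have hint : A ∩ (p.1 ∪ p.2) = p.1 := by
        ext x
        simp only [Finset.mem_inter, Finset.mem_union]
        constructor
        · rintro ⟨hxA, hx1 | hx2⟩
          · exact hx1
          · exact absurd hxA (Finset.mem_compl.1 (hp2 hx2))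
        · intro hx1
          exact ⟨hp1 hx1, Or.inl hx1⟩
      refine ⟨⟨Finset.subset_univ _, ?_⟩, by rw [hint, hp1c]⟩
      rw [Finset.card_union_of_disjoint hdisj, hp1c, hp2c]
      omega
    · intro B hB
      simp only [Finset.mem_filter, Finset.mem_powersetCard] at hB
      ext x
      simp only [Finset.mem_union, Finset.mem_inter, Finset.mem_sdiff]
      by_cases hx : x ∈ A <;> by_cases hx' : x ∈ B <;> tauto
    · intro p hp
      simp only [Finset.mem_product, Finset.mem_powersetCard] at hp
      obtain ⟨⟨hp1, hp1c⟩, hp2, hp2c⟩ := hp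
      have hint : A ∩ (p.1 ∪ p.2) = p.1 := by
        ext x
        simp only [Finset.mem_inter, Finset.mem_union]
        constructor
        · rintro ⟨hxA, hx1 | hx2⟩
          · exact hx1
          · exact absurd hxA (Finset.mem_compl.1 (hp2 hx2))
        · intro hx1
          exact ⟨hp1 hx1, Or.inl hx1⟩
      have hsd : (p.1 ∪ p.2) \ A = p.2 := by
        ext x
        simp only [Finset.mem_sdiff, Finset.mem_union]
        constructor
        · rintro ⟨hx1 | hx2, hxA⟩
          · exact absurd (hp1 hx1) hxA
          · exact hx2
        · intro hx2
          exact ⟨Or.inr hx2, Finset.mem_compl.1 (hp2 hx2)⟩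
      rw [Prod.ext_iff]
      exact ⟨hint, hsd⟩
  rw [key, Finset.card_product, Finset.card_powersetCard, Finset.card_powersetCard, hA,
    Finset.card_compl, Fintype.card_fin, hA]

end Aux2

/-- Hoeffding's variance formula: for a symmetric order-`k` kernel with
finite second moment applied to i.i.d. data, with
`ζ_c = Cov(h(Z_0,…,Z_{k-1}), h(Z_0,…,Z_{c-1}, Z'_c,…,Z'_{k-1}))` (independent copies `Z'`
realized as further terms of the i.i.d. sequence), the complete U-statistic
`U = C(N,k)⁻¹ ∑_{|A|=k} h(Z_A)` satisfies
`Var(U) = ∑_{c=1}^k [C(k,c)·C(N−k,k−c)/C(N,k)]·ζ_c`. -/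
theorem stmt_4 {Ω : Type*} [MeasurableSpace Ω] (P : Measure Ω) [IsProbabilityMeasure P]
    (N k : ℕ) (hk : 1 ≤ k) (hkN : k ≤ N)
    (h : (Fin k → ℝ) → ℝ) (hhmeas : Measurable h)
    (hsymm : ∀ (σ : Equiv.Perm (Fin k)) (x : Fin k → ℝ), h (x ∘ σ) = h x)
    (Z : ℕ → Ω → ℝ)
    (hmeas : ∀ i, Measurable (Z i))
    (hiid : iIndepFun Z P)
    (hident : ∀ i j, IdentDistrib (Z i) (Z j) P P)
    (hL2 : MemLp (fun ω => h (fun j => Z (j : ℕ) ω)) 2 P)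
    (ζ : ℕ → ℝ)
    (hζ : ∀ c, ζ c = cov P (fun ω => h (fun j => Z (j : ℕ) ω))
      (fun ω => h (fun j => if (j : ℕ) < c then Z (j : ℕ) ω else Z (k + (j : ℕ)) ω))) :
    variance (fun ω =>
        (∑ A ∈ Finset.powersetCard k (Finset.univ : Finset (Fin N)),
          kernelOn h Z A ω) / (N.choose k : ℝ)) P =
      ∑ c ∈ Finset.Icc 1 k,
        ((k.choose c : ℝ) * ((N - k).choose (k - c) : ℝ) / (N.choose k : ℝ)) * ζ c := by
  classical
  set PP := Finset.powersetCard k (Finset.univ : Finset (Fin N)) with hPdef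
  set X : Finset (Fin N) → Ω → ℝ := fun A => kernelOn h Z A with hXdef
  have hcard : ∀ A ∈ PP, A.card = k := fun A hA => (Finset.mem_powersetCard.1 hA).2
  have hXL2 : ∀ A ∈ PP, MemLp (X A) 2 P := fun A hA =>
    memL2_kernelOn hmeas hiid hident hhmeas hL2 A (hcard A hA)
  have hXint : ∀ A ∈ PP, Integrable (X A) P := fun A hA =>
    (hXL2 A hA).integrable (by norm_num)
  have hXmul : ∀ A ∈ PP, ∀ B ∈ PP, Integrable (fun ω => X A ω * X B ω) P := by
    intro A hA B hB
    have hm : MemLp (X A • X B) 1 P :=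
      (hXL2 B hB).smul (hXL2 A hA) (hpqr := ⟨by simp [ENNReal.inv_two_add_inv_two]⟩)
    rw [← memLp_one_iff_integrable]
    exact hm
  have hCpos : 0 < N.choose k := Nat.choose_pos hkN
  have hCne : (N.choose k : ℝ) ≠ 0 := by positivity
  set S : Ω → ℝ := fun ω => ∑ A ∈ PP, X A ω with hSdef
  have hSL2 : MemLp S 2 P := by
    have h0 := memLp_finset_sum' (μ := P) (p := 2) PP hXL2
    have hs : S = ∑ i ∈ PP, X i := by
      funext ω; simp [hSdef, Finset.sum_apply]
    rwa [hs]
  have hUS : (fun ω =>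
        (∑ A ∈ PP, kernelOn h Z A ω) / (N.choose k : ℝ))
      = ((N.choose k : ℝ)⁻¹ • S) := by
    funext ω
    simp [hSdef, div_eq_inv_mul, hXdef]
  rw [hUS, variance_smul]
  have hvar : variance S P = ∑ A ∈ PP, ∑ B ∈ PP, cov P (X A) (X B) := by
    rw [variance_eq_sub hSL2]
    have e1 : (∫ ω, (S ^ 2) ω ∂P) = ∑ A ∈ PP, ∑ B ∈ PP, ∫ ω, X A ω * X B ω ∂P := by
      have hsq : (S ^ 2 : Ω → ℝ) = fun ω => ∑ A ∈ PP, ∑ B ∈ PP, X A ω * X B ω := by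
        funext ω
        simp only [Pi.pow_apply, hSdef, sq, Finset.sum_mul_sum]
      rw [hsq, integral_finset_sum _ (fun A hA =>
        integrable_finset_sum _ (fun B hB => hXmul A hA B hB))]
      exact Finset.sum_congr rfl fun A hA =>
        integral_finset_sum _ fun B hB => hXmul A hA B hB
    have e2 : (∫ ω, S ω ∂P) = ∑ A ∈ PP, ∫ ω, X A ω ∂P := integral_finset_sum _ hXint
    show (∫ ω, (S ^ 2) ω ∂P) - (∫ ω, S ω ∂P) ^ 2 = _
    rw [e1, e2, sq, Finset.sum_mul_sum, ← Finset.sum_sub_distrib]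
    refine Finset.sum_congr rfl fun A _ => ?_
    rw [← Finset.sum_sub_distrib]
    simp only [cov]
  have hcov : ∀ A ∈ PP, ∀ B ∈ PP, cov P (X A) (X B) = ζ ((A ∩ B).card) := by
    intro A hA B hB
    rw [hζ ((A ∩ B).card)]
    exact cov_kernel hmeas hiid hident hhmeas hsymm A B (hcard A hA) (hcard B hB)
  have hζ0 : ζ 0 = 0 := by
    rw [hζ 0]
    have heq0 : (fun ω => h (fun j : Fin k =>
        if (j : ℕ) < 0 then Z (j : ℕ) ω else Z (k + (j : ℕ)) ω))
        = fun ω => h (fun j : Fin k => Z (k + (j : ℕ)) ω) := by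
      funext ω; simp
    rw [heq0]
    exact cov_disjoint_zero hmeas hiid hhmeas
  have hsum_B : ∀ A ∈ PP, ∑ B ∈ PP, ζ ((A ∩ B).card)
      = ∑ c ∈ Finset.range (k + 1),
          ((k.choose c * (N - k).choose (k - c) : ℕ) : ℝ) * ζ c := by
    intro A hA
    have hmap : ∀ B ∈ PP, (A ∩ B).card ∈ Finset.range (k + 1) := by
      intro B hB
      have : (A ∩ B).card ≤ k := (hcard A hA) ▸ Finset.card_le_card Finset.inter_subset_left
      simp [Finset.mem_range, Nat.lt_succ_iff, this]
    rw [← Finset.sum_fiberwise_of_maps_to hmap (fun B => ζ ((A ∩ B).card))]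
    refine Finset.sum_congr rfl fun c hc => ?_
    have hck : c ≤ k := Nat.lt_succ_iff.1 (Finset.mem_range.1 hc)
    have hinner : ∑ B ∈ PP.filter (fun B => (A ∩ B).card = c), ζ ((A ∩ B).card)
        = ∑ B ∈ PP.filter (fun B => (A ∩ B).card = c), ζ c :=
      Finset.sum_congr rfl fun B hB => by rw [(Finset.mem_filter.1 hB).2]
    rw [hinner, Finset.sum_const, nsmul_eq_mul, count_inter A (hcard A hA) c hck]
  have htot : variance S P
      = (N.choose k : ℝ) * ∑ c ∈ Finset.range (k + 1),
          ((k.choose c * (N - k).choose (k - c) : ℕ) : ℝ) * ζ c := by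
    rw [hvar]
    have : ∀ A ∈ PP, ∑ B ∈ PP, cov P (X A) (X B)
        = ∑ c ∈ Finset.range (k + 1),
            ((k.choose c * (N - k).choose (k - c) : ℕ) : ℝ) * ζ c := by
      intro A hA
      rw [Finset.sum_congr rfl (fun B hB => hcov A hA B hB), hsum_B A hA]
    rw [Finset.sum_congr rfl this, Finset.sum_const]
    have hPcard : PP.card = N.choose k := by
      rw [hPdef, Finset.card_powersetCard, Finset.card_univ, Fintype.card_fin]
    rw [hPcard, nsmul_eq_mul]
  rw [htot]
  have hrange : Finset.range (k + 1) = insert 0 (Finset.Icc 1 k) := by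
    ext x
    simp only [Finset.mem_range, Finset.mem_insert, Finset.mem_Icc]
    omega
  rw [hrange, Finset.sum_insert (by simp), hζ0, mul_zero, zero_add, Finset.mul_sum,
    Finset.mul_sum]
  refine Finset.sum_congr rfl fun c hc => ?_
  push_cast
  field_simp
end

section
/- Let Z_1,...,Z_N be i.i.d. ℝ^p-valued with mean 0, covariance Σ₀, and E‖Z‖⁴ < ∞. Consider the kernel h(Z_{s₁},...,Z_{s_k}) = tᵀ[ (1/(k(k−1))) (Σ_{i=1}^k Z_{s_i})(Σ_{i=1}^k Z_{s_i})ᵀ − (1/(k−1)) Σ₀ ] u for fixed vectors t, u ∈ ℝ^p. Then E[h] = 0 and Var(h) = O(1/k²) as k → ∞. -/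
open MeasureTheory ProbabilityTheory Filter Topology

section Helpers
variable {Ω : Type*} [MeasurableSpace Ω] {P : Measure Ω}

lemma abs4 (w x y z : ℝ) : |w * x * (y * z)| ≤ (w^4 + x^4 + y^4 + z^4) / 4 := by
  have h1 : |w * x * (y * z)| = |w| * |x| * (|y| * |z|) := by
    rw [abs_mul, abs_mul, abs_mul]
  rw [h1]
  nlinarith [sq_nonneg (|w| * |x| - |y| * |z|), sq_nonneg (|w| - |x|), sq_nonneg (|y| - |z|),
    abs_nonneg w, abs_nonneg x, abs_nonneg y, abs_nonneg z,
    sq_abs w, sq_abs x, sq_abs y, sq_abs z,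
    mul_nonneg (abs_nonneg w) (abs_nonneg x), mul_nonneg (abs_nonneg y) (abs_nonneg z)]

lemma int_pow4 {f : Ω → ℝ} (hf : MemLp f 4 P) : Integrable (fun ω => f ω ^ 4) P := by
  have h := hf.integrable_norm_rpow (by norm_num) (by norm_num)
  refine h.congr (Filter.Eventually.of_forall fun ω => ?_)
  simp only [ENNReal.toReal_ofNat, Real.norm_eq_abs]
  rw [show ((4:ℝ):ℝ) = ((4:ℕ):ℝ) by norm_num, Real.rpow_natCast, pow_abs,
    abs_of_nonneg (by positivity : (0:ℝ) ≤ f ω ^ 4)]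

lemma int_mul2 {f g : Ω → ℝ} (hf : MemLp f 2 P) (hg : MemLp g 2 P) :
    Integrable (fun ω => f ω * g ω) P := by
  have hf2 : Integrable (fun ω => f ω ^ 2) P :=
    (memLp_two_iff_integrable_sq hf.aestronglyMeasurable).mp hf
  have hg2 : Integrable (fun ω => g ω ^ 2) P :=
    (memLp_two_iff_integrable_sq hg.aestronglyMeasurable).mp hg
  refine Integrable.mono' ((hf2.add hg2).div_const 2)
    (hf.aestronglyMeasurable.mul hg.aestronglyMeasurable)
    (Filter.Eventually.of_forall fun ω => ?_)
  simp only [Pi.add_apply]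
  rw [Real.norm_eq_abs, abs_mul]
  nlinarith [sq_nonneg (|f ω| - |g ω|), sq_abs (f ω), sq_abs (g ω)]

lemma lone_zero (V : ℕ → Ω → ℝ × ℝ) (hVm : ∀ i, Measurable (V i))
    (hV : iIndepFun V P)
    (f g1 g2 g3 : ℝ × ℝ → ℝ) (hf : Measurable f) (hg1 : Measurable g1)
    (hg2 : Measurable g2) (hg3 : Measurable g3)
    (i j m n : ℕ) (hij : i ≠ j) (him : i ≠ m) (hin : i ≠ n)
    (h0 : ∫ ω, f (V i ω) ∂P = 0) :
    ∫ ω, f (V i ω) * (g1 (V j ω) * g2 (V m ω) * g3 (V n ω)) ∂P = 0 := by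
  classical
  have hd : Disjoint ({i} : Finset ℕ) ({j, m, n} : Finset ℕ) := by
    simp [Finset.disjoint_left, hij, him, hin]
  have hbase := hV.indepFun_finset {i} {j, m, n} hd hVm
  have hii : i ∈ ({i} : Finset ℕ) := by simp
  have hjm : j ∈ ({j, m, n} : Finset ℕ) := by simp
  have hmm : m ∈ ({j, m, n} : Finset ℕ) := by simp
  have hnm : n ∈ ({j, m, n} : Finset ℕ) := by simp
  have hcomp : IndepFun (fun ω => f (V i ω))
      (fun ω => g1 (V j ω) * g2 (V m ω) * g3 (V n ω)) P := by
    exact hbase.comp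
      (φ := fun v : ({i} : Finset ℕ) → ℝ × ℝ => f (v ⟨i, hii⟩))
      (ψ := fun v : ({j, m, n} : Finset ℕ) → ℝ × ℝ =>
        g1 (v ⟨j, hjm⟩) * g2 (v ⟨m, hmm⟩) * g3 (v ⟨n, hnm⟩))
      (hf.comp (measurable_pi_apply _))
      (((hg1.comp (measurable_pi_apply _)).mul (hg2.comp (measurable_pi_apply _))).mul
        (hg3.comp (measurable_pi_apply _)))
  have h1 := hcomp.integral_mul_eq_mul_integral
    ((hf.comp (hVm i)).aestronglyMeasurable)
    ((((hg1.comp (hVm j)).mul (hg2.comp (hVm m))).mul (hg3.comp (hVm n))).aestronglyMeasurable)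
  have h2 : ∫ ω, f (V i ω) * (g1 (V j ω) * g2 (V m ω) * g3 (V n ω)) ∂P
      = (∫ ω, f (V i ω) ∂P) * ∫ ω, g1 (V j ω) * g2 (V m ω) * g3 (V n ω) ∂P := by
    simpa [Pi.mul_apply] using h1
  rw [h2, h0, zero_mul]

end Helpers

set_option maxHeartbeats 2000000 in
/-- For i.i.d. centered data in `ℝ^p` with covariance `Σ₀` and finite fourth
moments, the kernel
`h_k = tᵀ[ (1/(k(k−1)))(∑_{i<k} Z_i)(∑_{i<k} Z_i)ᵀ − (1/(k−1))Σ₀ ]u`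
satisfies `E[h_k] = 0` for every `k ≥ 2`, and there is a constant `C` (independent of `k`)
with `Var(h_k) ≤ C/k²` for all `k ≥ 2`. -/
theorem stmt_16 {Ω : Type*} [MeasurableSpace Ω] (P : Measure Ω) [IsProbabilityMeasure P]
    (p : ℕ)
    (Z : ℕ → Ω → (Fin p → ℝ))
    (hmeas : ∀ i, Measurable (Z i))
    (hiid : iIndepFun Z P)
    (hident : ∀ i j, IdentDistrib (Z i) (Z j) P P)
    (hL4 : ∀ i, MemLp (Z i) 4 P)
    (hmean : ∀ i, ∀ a : Fin p, ∫ ω, Z i ω a ∂P = 0)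
    (S0 : Matrix (Fin p) (Fin p) ℝ)
    (hcov : ∀ i, ∀ a b : Fin p, ∫ ω, Z i ω a * Z i ω b ∂P = S0 a b)
    (t u : Fin p → ℝ) :
    (∀ k : ℕ, 2 ≤ k →
      (∫ ω, ∑ a : Fin p, ∑ b : Fin p, t a *
        (((k : ℝ) * ((k : ℝ) - 1))⁻¹ *
            ((∑ i ∈ Finset.range k, Z i ω a) * (∑ i ∈ Finset.range k, Z i ω b)) -
          ((k : ℝ) - 1)⁻¹ * S0 a b) * u b ∂P) = 0) ∧
    ∃ C : ℝ, ∀ k : ℕ, 2 ≤ k →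
      variance (fun ω => ∑ a : Fin p, ∑ b : Fin p, t a *
        (((k : ℝ) * ((k : ℝ) - 1))⁻¹ *
            ((∑ i ∈ Finset.range k, Z i ω a) * (∑ i ∈ Finset.range k, Z i ω b)) -
          ((k : ℝ) - 1)⁻¹ * S0 a b) * u b) P ≤ C / (k : ℝ) ^ 2 := by
  classical
  -- coordinates
  have hzc4 : ∀ (i : ℕ) (a : Fin p), MemLp (fun ω => Z i ω a) 4 P := by
    intro i a
    have := (ContinuousLinearMap.proj (R := ℝ) (φ := fun _ : Fin p => ℝ) a).comp_memLp' (hL4 i)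
    exact this
  have hzc2 : ∀ (i : ℕ) (a : Fin p), MemLp (fun ω => Z i ω a) 2 P := fun i a =>
    (hzc4 i a).mono_exponent (by norm_num)
  have hzcm : ∀ (i : ℕ) (a : Fin p), Measurable (fun ω => Z i ω a) := fun i a =>
    (measurable_pi_apply a).comp (hmeas i)
  -- the linear functionals
  set φA : (Fin p → ℝ) → ℝ := fun x => ∑ a, t a * x a with hφA
  set φB : (Fin p → ℝ) → ℝ := fun x => ∑ a, u a * x a with hφB
  have hφAm : Measurable φA := by
    apply Finset.measurable_sum
    exact fun a _ => by fun_prop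
  have hφBm : Measurable φB := by
    apply Finset.measurable_sum
    exact fun a _ => by fun_prop
  set A : ℕ → Ω → ℝ := fun i ω => φA (Z i ω) with hA
  set B : ℕ → Ω → ℝ := fun i ω => φB (Z i ω) with hB
  set V : ℕ → Ω → ℝ × ℝ := fun i ω => (A i ω, B i ω) with hV
  have hAm : ∀ i, Measurable (A i) := fun i => hφAm.comp (hmeas i)
  have hBm : ∀ i, Measurable (B i) := fun i => hφBm.comp (hmeas i)
  have hVm : ∀ i, Measurable (V i) := fun i => (hAm i).prodMk (hBm i)
  have hViid : iIndepFun V P :=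
    hiid.comp (fun _ x => (φA x, φB x)) (fun _ => hφAm.prodMk hφBm)
  have hA4 : ∀ i, MemLp (A i) 4 P := by
    intro i
    exact memLp_finset_sum Finset.univ (fun a _ => (hzc4 i a).const_mul (t a))
  have hB4 : ∀ i, MemLp (B i) 4 P := by
    intro i
    exact memLp_finset_sum Finset.univ (fun a _ => (hzc4 i a).const_mul (u a))
  have hA2 : ∀ i, MemLp (A i) 2 P := fun i => (hA4 i).mono_exponent (by norm_num)
  have hB2 : ∀ i, MemLp (B i) 2 P := fun i => (hB4 i).mono_exponent (by norm_num)
  -- means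
  have hEA : ∀ i, ∫ ω, A i ω ∂P = 0 := by
    intro i
    rw [hA, hφA]
    rw [integral_finset_sum _ (fun a _ => ((hzc4 i a).integrable (by norm_num)).const_mul (t a))]
    simp [integral_const_mul, hmean i]
  have hEB : ∀ i, ∫ ω, B i ω ∂P = 0 := by
    intro i
    rw [hB, hφB]
    rw [integral_finset_sum _ (fun a _ => ((hzc4 i a).integrable (by norm_num)).const_mul (u a))]
    simp [integral_const_mul, hmean i]
  -- covariance of the linear functionals
  set μ : ℝ := ∑ a : Fin p, ∑ b : Fin p, t a * u b * S0 a b with hμ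
  have hABμ : ∀ i, ∫ ω, A i ω * B i ω ∂P = μ := by
    intro i
    have h1 : (fun ω => A i ω * B i ω)
        = fun ω => ∑ a : Fin p, ∑ b : Fin p, t a * u b * (Z i ω a * Z i ω b) := by
      funext ω
      rw [hA, hB, hφA, hφB]
      rw [Finset.sum_mul_sum]
      exact Finset.sum_congr rfl fun a _ => Finset.sum_congr rfl fun b _ => by ring
    rw [h1]
    have hint : ∀ (a b : Fin p), Integrable (fun ω => t a * u b * (Z i ω a * Z i ω b)) P :=
      fun a b => (int_mul2 (hzc2 i a) (hzc2 i b)).const_mul _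
    rw [integral_finset_sum _ (fun a _ => integrable_finset_sum _ (fun b _ => hint a b))]
    rw [hμ]
    refine Finset.sum_congr rfl fun a _ => ?_
    rw [integral_finset_sum _ (fun b _ => hint a b)]
    refine Finset.sum_congr rfl fun b _ => ?_
    rw [integral_const_mul, hcov i a b]
  -- expectation of mixed products
  have heAB : ∀ i j : ℕ, ∫ ω, A i ω * B j ω ∂P = if i = j then μ else 0 := by
    intro i j
    by_cases hij : i = j
    · rw [if_pos hij, hij, hABμ]
    · rw [if_neg hij]
      have hind : IndepFun (A i) (B j) P :=
        (hViid.indepFun hij).comp measurable_fst measurable_snd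
      have := hind.integral_mul_eq_mul_integral (hAm i).aestronglyMeasurable (hBm j).aestronglyMeasurable
      have h2 : ∫ ω, A i ω * B j ω ∂P = (∫ ω, A i ω ∂P) * ∫ ω, B j ω ∂P := by
        simpa [Pi.mul_apply] using this
      rw [h2, hEA, zero_mul]
  have hABint : ∀ i j : ℕ, Integrable (fun ω => A i ω * B j ω) P :=
    fun i j => int_mul2 (hA2 i) (hB2 j)
  have hXYint : ∀ k : ℕ, Integrable
      (fun ω => (∑ i ∈ Finset.range k, A i ω) * (∑ j ∈ Finset.range k, B j ω)) P := by
    intro k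
    have h1 : (fun ω => (∑ i ∈ Finset.range k, A i ω) * (∑ j ∈ Finset.range k, B j ω))
        = fun ω => ∑ i ∈ Finset.range k, ∑ j ∈ Finset.range k, A i ω * B j ω := by
      funext ω; rw [Finset.sum_mul_sum]
    rw [h1]
    exact integrable_finset_sum _ fun i _ => integrable_finset_sum _ fun j _ => hABint i j
  have hEXY : ∀ k : ℕ, ∫ ω, (∑ i ∈ Finset.range k, A i ω) * (∑ j ∈ Finset.range k, B j ω) ∂P
      = (k : ℝ) * μ := by
    intro k
    have h1 : (fun ω => (∑ i ∈ Finset.range k, A i ω) * (∑ j ∈ Finset.range k, B j ω))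
        = fun ω => ∑ i ∈ Finset.range k, ∑ j ∈ Finset.range k, A i ω * B j ω := by
      funext ω; rw [Finset.sum_mul_sum]
    rw [h1, integral_finset_sum _ (fun i _ => integrable_finset_sum _ fun j _ => hABint i j)]
    have h2 : ∀ i ∈ Finset.range k,
        (∫ ω, ∑ j ∈ Finset.range k, A i ω * B j ω ∂P) = μ := by
      intro i hi
      rw [integral_finset_sum _ (fun j _ => hABint i j)]
      have h3 : ∀ j ∈ Finset.range k, (∫ ω, A i ω * B j ω ∂P) = if i = j then μ else 0 :=
        fun j _ => heAB i j
      rw [Finset.sum_congr rfl h3, Finset.sum_ite_eq (Finset.range k) i (fun _ => μ),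
        if_pos hi]
    rw [Finset.sum_congr rfl h2, Finset.sum_const, Finset.card_range, nsmul_eq_mul]
  -- pointwise rewriting of the kernel
  have hfun : ∀ k : ℕ, 2 ≤ k →
      (fun ω => ∑ a : Fin p, ∑ b : Fin p, t a *
        (((k : ℝ) * ((k : ℝ) - 1))⁻¹ *
            ((∑ i ∈ Finset.range k, Z i ω a) * (∑ i ∈ Finset.range k, Z i ω b)) -
          ((k : ℝ) - 1)⁻¹ * S0 a b) * u b)
      = fun ω => ((k : ℝ) * ((k : ℝ) - 1))⁻¹ *
          ((∑ i ∈ Finset.range k, A i ω) * (∑ i ∈ Finset.range k, B i ω))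
          - ((k : ℝ) * ((k : ℝ) - 1))⁻¹ * (k : ℝ) * μ := by
    intro k hk
    have hk0 : (k : ℝ) ≠ 0 := by
      have : (2 : ℝ) ≤ (k : ℝ) := by exact_mod_cast hk
      linarith
    have hd : ((k : ℝ) - 1)⁻¹ = ((k : ℝ) * ((k : ℝ) - 1))⁻¹ * (k : ℝ) := by
      rw [mul_inv, mul_comm ((k : ℝ)⁻¹), mul_assoc, inv_mul_cancel₀ hk0, mul_one]
    funext ω
    rw [hd]
    set c : ℝ := ((k : ℝ) * ((k : ℝ) - 1))⁻¹ with hc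
    have e1 : ∀ a b : Fin p, t a *
        (c * ((∑ i ∈ Finset.range k, Z i ω a) * (∑ i ∈ Finset.range k, Z i ω b))
          - c * (k : ℝ) * S0 a b) * u b
        = c * ((t a * ∑ i ∈ Finset.range k, Z i ω a) * (u b * ∑ i ∈ Finset.range k, Z i ω b))
          - c * (k : ℝ) * (t a * u b * S0 a b) := fun a b => by ring
    have hXa : (∑ a : Fin p, t a * ∑ i ∈ Finset.range k, Z i ω a)
        = ∑ i ∈ Finset.range k, A i ω := by
      simp only [hA, hφA]
      simp_rw [Finset.mul_sum]
      exact Finset.sum_comm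
    have hYb : (∑ b : Fin p, u b * ∑ i ∈ Finset.range k, Z i ω b)
        = ∑ i ∈ Finset.range k, B i ω := by
      simp only [hB, hφB]
      simp_rw [Finset.mul_sum]
      exact Finset.sum_comm
    rw [Finset.sum_congr rfl fun a _ => Finset.sum_congr rfl fun b _ => e1 a b]
    simp_rw [Finset.sum_sub_distrib, ← Finset.mul_sum, ← Finset.sum_mul]
    rw [hXa, hYb, ← hμ]
  -- the mean is zero
  have hmean0 : ∀ k : ℕ, 2 ≤ k →
      (∫ ω, (((k : ℝ) * ((k : ℝ) - 1))⁻¹ *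
          ((∑ i ∈ Finset.range k, A i ω) * (∑ i ∈ Finset.range k, B i ω))
          - ((k : ℝ) * ((k : ℝ) - 1))⁻¹ * (k : ℝ) * μ) ∂P) = 0 := by
    intro k hk
    rw [integral_sub ((hXYint k).const_mul _) (integrable_const _)]
    rw [integral_const_mul, hEXY k, integral_const]
    simp
    ring
  -- fourth moments
  have hA4int : ∀ i, Integrable (fun ω => A i ω ^ 4) P := fun i => int_pow4 (hA4 i)
  have hB4int : ∀ i, Integrable (fun ω => B i ω ^ 4) P := fun i => int_pow4 (hB4 i)
  have hAeq4 : ∀ i, ∫ ω, A i ω ^ 4 ∂P = ∫ ω, A 0 ω ^ 4 ∂P := by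
    intro i
    exact ((hident i 0).comp (hφAm.pow_const 4)).integral_eq
  have hBeq4 : ∀ i, ∫ ω, B i ω ^ 4 ∂P = ∫ ω, B 0 ω ^ 4 ∂P := by
    intro i
    exact ((hident i 0).comp (hφBm.pow_const 4)).integral_eq
  set M : ℝ := ((∫ ω, A 0 ω ^ 4 ∂P) + ∫ ω, B 0 ω ^ 4 ∂P) / 2 with hMdef
  have hM : 0 ≤ M := by
    have h1 : 0 ≤ ∫ ω, A 0 ω ^ 4 ∂P := integral_nonneg fun ω => by positivity
    have h2 : 0 ≤ ∫ ω, B 0 ω ^ 4 ∂P := integral_nonneg fun ω => by positivity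
    rw [hMdef]; linarith
  have hqint : ∀ i j m n : ℕ, Integrable (fun ω => A i ω * B j ω * (A m ω * B n ω)) P := by
    intro i j m n
    have hD : Integrable (fun ω => (A i ω ^ 4 + B j ω ^ 4 + A m ω ^ 4 + B n ω ^ 4) / 4) P := by
      apply Integrable.div_const
      exact (((hA4int i).add (hB4int j)).add (hA4int m)).add (hB4int n)
    refine Integrable.mono' hD
      ((((hAm i).mul (hBm j)).mul ((hAm m).mul (hBm n))).aestronglyMeasurable)
      (Filter.Eventually.of_forall fun ω => ?_)
    rw [Real.norm_eq_abs]
    exact abs4 _ _ _ _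
  have hbound : ∀ i j m n : ℕ, |∫ ω, A i ω * B j ω * (A m ω * B n ω) ∂P| ≤ M := by
    intro i j m n
    have h1 : |∫ ω, A i ω * B j ω * (A m ω * B n ω) ∂P|
        ≤ ∫ ω, |A i ω * B j ω * (A m ω * B n ω)| ∂P := by
      simpa only [Real.norm_eq_abs] using
        norm_integral_le_integral_norm (μ := P) (fun ω => A i ω * B j ω * (A m ω * B n ω))
    refine h1.trans ?_
    have h2 : ∫ ω, |A i ω * B j ω * (A m ω * B n ω)| ∂P
        ≤ ∫ ω, (A i ω ^ 4 + B j ω ^ 4 + A m ω ^ 4 + B n ω ^ 4) / 4 ∂P := by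
      refine integral_mono (hqint i j m n).abs ?_ fun ω => abs4 _ _ _ _
      apply Integrable.div_const
      exact (((hA4int i).add (hB4int j)).add (hA4int m)).add (hB4int n)
    refine h2.trans ?_
    have h3 : ∫ ω, (A i ω ^ 4 + B j ω ^ 4 + A m ω ^ 4 + B n ω ^ 4) / 4 ∂P
        = ((∫ ω, A i ω ^ 4 ∂P) + (∫ ω, B j ω ^ 4 ∂P) + (∫ ω, A m ω ^ 4 ∂P)
            + ∫ ω, B n ω ^ 4 ∂P) / 4 := by
      have int2 : Integrable (fun ω => A i ω ^ 4 + B j ω ^ 4) P := (hA4int i).add (hB4int j)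
      have int3 : Integrable (fun ω => A i ω ^ 4 + B j ω ^ 4 + A m ω ^ 4) P :=
        int2.add (hA4int m)
      rw [integral_div, integral_add int3 (hB4int n), integral_add int2 (hA4int m),
        integral_add (hA4int i) (hB4int j)]
    rw [h3, hAeq4 i, hBeq4 j, hAeq4 m, hBeq4 n, hMdef]
    linarith
  -- vanishing of terms with a lone index
  have hEVA : ∀ i, ∫ ω, Prod.fst (V i ω) ∂P = 0 := by
    intro i; simpa [hV] using hEA i
  have hEVB : ∀ i, ∫ ω, Prod.snd (V i ω) ∂P = 0 := by
    intro i; simpa [hV] using hEB i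
  have hz : ∀ i j m n : ℕ, ¬((i = j ∧ m = n) ∨ (i = m ∧ j = n) ∨ (i = n ∧ j = m)) →
      ∫ ω, A i ω * B j ω * (A m ω * B n ω) ∂P = 0 := by
    intro i j m n hcond
    push_neg at hcond
    obtain ⟨h1, h2, h3⟩ := hcond
    by_cases hij : i = j
    · subst hij
      have hmn : m ≠ n := h1 rfl
      by_cases him : i = m
      · subst him
        -- n is lone
        have hni : n ≠ i := Ne.symm hmn
        have h0 := lone_zero V hVm hViid Prod.snd Prod.fst Prod.snd Prod.fst
          measurable_snd measurable_fst measurable_snd measurable_fst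
          n i i i hni hni hni (hEVB n)
        calc ∫ ω, A i ω * B i ω * (A i ω * B n ω) ∂P
            = ∫ ω, Prod.snd (V n ω) *
                (Prod.fst (V i ω) * Prod.snd (V i ω) * Prod.fst (V i ω)) ∂P := by
              refine integral_congr_ae (Filter.Eventually.of_forall fun ω => ?_)
              simp only [hV]
              ring
          _ = 0 := h0
      · -- m is lone
        have hmi : m ≠ i := Ne.symm him
        have h0 := lone_zero V hVm hViid Prod.fst Prod.fst Prod.snd Prod.snd
          measurable_fst measurable_fst measurable_snd measurable_snd
          m i i n hmi hmi hmn (hEVA m)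
        calc ∫ ω, A i ω * B i ω * (A m ω * B n ω) ∂P
            = ∫ ω, Prod.fst (V m ω) *
                (Prod.fst (V i ω) * Prod.snd (V i ω) * Prod.snd (V n ω)) ∂P := by
              refine integral_congr_ae (Filter.Eventually.of_forall fun ω => ?_)
              simp only [hV]
              ring
          _ = 0 := h0
    · by_cases him : i = m
      · subst him
        have hjn : j ≠ n := h2 rfl
        have hji : j ≠ i := Ne.symm hij
        have h0 := lone_zero V hVm hViid Prod.snd Prod.fst Prod.fst Prod.snd
          measurable_snd measurable_fst measurable_fst measurable_snd
          j i i n hji hji hjn (hEVB j)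
        calc ∫ ω, A i ω * B j ω * (A i ω * B n ω) ∂P
            = ∫ ω, Prod.snd (V j ω) *
                (Prod.fst (V i ω) * Prod.fst (V i ω) * Prod.snd (V n ω)) ∂P := by
              refine integral_congr_ae (Filter.Eventually.of_forall fun ω => ?_)
              simp only [hV]
              ring
          _ = 0 := h0
      · by_cases hin : i = n
        · subst hin
          have hjm : j ≠ m := h3 rfl
          have hji : j ≠ i := Ne.symm hij
          have h0 := lone_zero V hVm hViid Prod.snd Prod.fst Prod.fst Prod.snd
            measurable_snd measurable_fst measurable_fst measurable_snd
            j i m i hji hjm hji (hEVB j)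
          calc ∫ ω, A i ω * B j ω * (A m ω * B i ω) ∂P
              = ∫ ω, Prod.snd (V j ω) *
                  (Prod.fst (V i ω) * Prod.fst (V m ω) * Prod.snd (V i ω)) ∂P := by
                refine integral_congr_ae (Filter.Eventually.of_forall fun ω => ?_)
                simp only [hV]
                ring
            _ = 0 := h0
        · -- i is lone
          have h0 := lone_zero V hVm hViid Prod.fst Prod.snd Prod.fst Prod.snd
            measurable_fst measurable_snd measurable_fst measurable_snd
            i j m n hij him hin (hEVA i)
          calc ∫ ω, A i ω * B j ω * (A m ω * B n ω) ∂P
              = ∫ ω, Prod.fst (V i ω) *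
                  (Prod.snd (V j ω) * Prod.fst (V m ω) * Prod.snd (V n ω)) ∂P := by
                refine integral_congr_ae (Filter.Eventually.of_forall fun ω => ?_)
                simp only [hV]
                ring
            _ = 0 := h0
  have hiteb : ∀ i j m n : ℕ, |∫ ω, A i ω * B j ω * (A m ω * B n ω) ∂P|
      ≤ (if ((i = j ∧ m = n) ∨ (i = m ∧ j = n) ∨ (i = n ∧ j = m)) then M else 0) := by
    intro i j m n
    by_cases hc : ((i = j ∧ m = n) ∨ (i = m ∧ j = n) ∨ (i = n ∧ j = m))
    · rw [if_pos hc]; exact hbound i j m n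
    · rw [if_neg hc, hz i j m n hc]; simp
  constructor
  · intro k hk
    rw [hfun k hk]
    exact hmean0 k hk
  · refine ⟨12 * M, ?_⟩
    intro k hk
    rw [hfun k hk]
    have hk2 : (2:ℝ) ≤ (k:ℝ) := by exact_mod_cast hk
    have hXm : Measurable (fun ω => ∑ i ∈ Finset.range k, A i ω) :=
      Finset.measurable_sum _ fun i _ => hAm i
    have hYm : Measurable (fun ω => ∑ i ∈ Finset.range k, B i ω) :=
      Finset.measurable_sum _ fun i _ => hBm i
    have hsq : (fun ω => ((∑ i ∈ Finset.range k, A i ω) * (∑ i ∈ Finset.range k, B i ω))^2)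
        = fun ω => ∑ i ∈ Finset.range k, ∑ m ∈ Finset.range k, ∑ j ∈ Finset.range k,
            ∑ n ∈ Finset.range k, A i ω * B j ω * (A m ω * B n ω) := by
      funext ω
      have h1 : (∑ i ∈ Finset.range k, A i ω) * (∑ i ∈ Finset.range k, B i ω)
          = ∑ i ∈ Finset.range k, ∑ j ∈ Finset.range k, A i ω * B j ω :=
        Finset.sum_mul_sum _ _ _ _
      rw [sq, h1, Finset.sum_mul_sum]
      refine Finset.sum_congr rfl fun i _ => Finset.sum_congr rfl fun m _ => ?_
      exact Finset.sum_mul_sum _ _ _ _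
    have hqint4 : Integrable
        (fun ω => ((∑ i ∈ Finset.range k, A i ω) * (∑ i ∈ Finset.range k, B i ω))^2) P := by
      rw [hsq]
      exact integrable_finset_sum _ fun i _ => integrable_finset_sum _ fun m _ =>
        integrable_finset_sum _ fun j _ => integrable_finset_sum _ fun n _ => hqint i j m n
    have hXY2 : MemLp (fun ω => (∑ i ∈ Finset.range k, A i ω)
        * (∑ i ∈ Finset.range k, B i ω)) 2 P :=
      (memLp_two_iff_integrable_sq (hXm.mul hYm).aestronglyMeasurable).mpr hqint4
    have hG2 : MemLp (fun ω => ((k:ℝ) * ((k:ℝ) - 1))⁻¹ *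
        ((∑ i ∈ Finset.range k, A i ω) * (∑ i ∈ Finset.range k, B i ω))
        - ((k:ℝ) * ((k:ℝ) - 1))⁻¹ * (k:ℝ) * μ) 2 P :=
      (hXY2.const_mul _).sub (memLp_const _)
    set Q : ℝ := ∑ i ∈ Finset.range k, ∑ m ∈ Finset.range k, ∑ j ∈ Finset.range k,
        ∑ n ∈ Finset.range k, ∫ ω, A i ω * B j ω * (A m ω * B n ω) ∂P with hQdef
    have hEsq : ∫ ω, ((∑ i ∈ Finset.range k, A i ω)
        * (∑ i ∈ Finset.range k, B i ω))^2 ∂P = Q := by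
      rw [hsq, integral_finset_sum _ (fun i _ => integrable_finset_sum _ fun m _ =>
        integrable_finset_sum _ fun j _ => integrable_finset_sum _ fun n _ => hqint i j m n)]
      rw [hQdef]
      refine Finset.sum_congr rfl fun i _ => ?_
      rw [integral_finset_sum _ (fun m _ => integrable_finset_sum _ fun j _ =>
        integrable_finset_sum _ fun n _ => hqint i j m n)]
      refine Finset.sum_congr rfl fun m _ => ?_
      rw [integral_finset_sum _ (fun j _ => integrable_finset_sum _ fun n _ => hqint i j m n)]
      refine Finset.sum_congr rfl fun j _ => ?_
      rw [integral_finset_sum _ (fun n _ => hqint i j m n)]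
    have hGsq : (fun ω => (((k:ℝ) * ((k:ℝ) - 1))⁻¹ *
          ((∑ i ∈ Finset.range k, A i ω) * (∑ i ∈ Finset.range k, B i ω))
          - ((k:ℝ) * ((k:ℝ) - 1))⁻¹ * (k:ℝ) * μ)^2)
        = fun ω => ((((k:ℝ) * ((k:ℝ) - 1))⁻¹)^2 *
            (((∑ i ∈ Finset.range k, A i ω) * (∑ i ∈ Finset.range k, B i ω))^2)
          - (2 * (((k:ℝ) * ((k:ℝ) - 1))⁻¹)^2 * (k:ℝ) * μ) *
            ((∑ i ∈ Finset.range k, A i ω) * (∑ i ∈ Finset.range k, B i ω)))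
          + (((k:ℝ) * ((k:ℝ) - 1))⁻¹ * (k:ℝ) * μ)^2 := by
      funext ω
      ring
    have intsub : Integrable (fun ω => (((k:ℝ) * ((k:ℝ) - 1))⁻¹)^2 *
          (((∑ i ∈ Finset.range k, A i ω) * (∑ i ∈ Finset.range k, B i ω))^2)
          - (2 * (((k:ℝ) * ((k:ℝ) - 1))⁻¹)^2 * (k:ℝ) * μ) *
            ((∑ i ∈ Finset.range k, A i ω) * (∑ i ∈ Finset.range k, B i ω))) P :=
      (hqint4.const_mul _).sub ((hXYint k).const_mul _)
    have hEG2 : ∫ ω, (((k:ℝ) * ((k:ℝ) - 1))⁻¹ *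
          ((∑ i ∈ Finset.range k, A i ω) * (∑ i ∈ Finset.range k, B i ω))
          - ((k:ℝ) * ((k:ℝ) - 1))⁻¹ * (k:ℝ) * μ)^2 ∂P
        = (((k:ℝ) * ((k:ℝ) - 1))⁻¹)^2 * Q
          - (2 * (((k:ℝ) * ((k:ℝ) - 1))⁻¹)^2 * (k:ℝ) * μ) * ((k:ℝ) * μ)
          + (((k:ℝ) * ((k:ℝ) - 1))⁻¹ * (k:ℝ) * μ)^2 := by
      rw [hGsq, integral_add intsub (integrable_const _),
        integral_sub (hqint4.const_mul _) ((hXYint k).const_mul _),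
        integral_const_mul, integral_const_mul, hEsq, hEXY k, integral_const]
      simp
    have hvareq : variance (fun ω => ((k:ℝ) * ((k:ℝ) - 1))⁻¹ *
          ((∑ i ∈ Finset.range k, A i ω) * (∑ i ∈ Finset.range k, B i ω))
          - ((k:ℝ) * ((k:ℝ) - 1))⁻¹ * (k:ℝ) * μ) P
        = (((k:ℝ) * ((k:ℝ) - 1))⁻¹)^2 * (Q - ((k:ℝ) * μ)^2) := by
      rw [variance_eq_sub hG2]
      simp only [Pi.pow_apply]
      rw [hEG2, hmean0 k hk]
      ring
    have hsplit : ∀ i j m n : ℕ,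
        (if ((i = j ∧ m = n) ∨ (i = m ∧ j = n) ∨ (i = n ∧ j = m)) then M else 0)
        ≤ (if (i = j ∧ m = n) then M else 0) + (if (i = m ∧ j = n) then M else 0)
          + (if (i = n ∧ j = m) then M else 0) := by
      intro i j m n
      split_ifs <;> first | linarith [hM] | tauto
    have hcount : (∑ i ∈ Finset.range k, ∑ m ∈ Finset.range k, ∑ j ∈ Finset.range k,
        ∑ n ∈ Finset.range k, ((if (i = j ∧ m = n) then M else 0)
          + (if (i = m ∧ j = n) then M else 0) + (if (i = n ∧ j = m) then M else 0)))
        = 3 * (k:ℝ)^2 * M := by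
      simp [Finset.sum_add_distrib, ite_and, Finset.sum_ite_eq, Finset.sum_ite_eq',
        Finset.mem_range, Finset.sum_const, Finset.card_range]
      rw [Finset.sum_congr rfl (fun i hi => if_pos (Finset.mem_range.mp hi)),
        Finset.sum_congr rfl (fun i hi => by
          rw [Finset.sum_congr rfl (fun m hm => if_pos (Finset.mem_range.mp hm)),
            Finset.sum_const, Finset.card_range, nsmul_eq_mul])]
      rw [Finset.sum_const, Finset.card_range, nsmul_eq_mul]
      ring
    have hQb : |Q| ≤ 3 * (k:ℝ)^2 * M := by
      have habs : |Q| ≤ ∑ i ∈ Finset.range k, ∑ m ∈ Finset.range k, ∑ j ∈ Finset.range k,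
          ∑ n ∈ Finset.range k, |∫ ω, A i ω * B j ω * (A m ω * B n ω) ∂P| := by
        rw [hQdef]
        refine (Finset.abs_sum_le_sum_abs _ _).trans (Finset.sum_le_sum fun i _ => ?_)
        refine (Finset.abs_sum_le_sum_abs _ _).trans (Finset.sum_le_sum fun m _ => ?_)
        refine (Finset.abs_sum_le_sum_abs _ _).trans (Finset.sum_le_sum fun j _ => ?_)
        exact Finset.abs_sum_le_sum_abs _ _
      refine habs.trans ?_
      rw [← hcount]
      refine Finset.sum_le_sum fun i _ => Finset.sum_le_sum fun m _ =>
        Finset.sum_le_sum fun j _ => Finset.sum_le_sum fun n _ => ?_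
      exact (hiteb i j m n).trans (hsplit i j m n)
    rw [hvareq]
    have hstep : (((k:ℝ) * ((k:ℝ) - 1))⁻¹)^2 * (Q - ((k:ℝ) * μ)^2)
        ≤ (((k:ℝ) * ((k:ℝ) - 1))⁻¹)^2 * (3 * (k:ℝ)^2 * M) := by
      refine mul_le_mul_of_nonneg_left ?_ (sq_nonneg _)
      exact ((sub_le_self _ (sq_nonneg _)).trans (le_abs_self _)).trans hQb
    refine hstep.trans ?_
    have hk1 : (0:ℝ) < (k:ℝ) - 1 := by linarith
    have hk0 : (0:ℝ) < (k:ℝ) := by linarith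
    have heq : ((((k:ℝ) * ((k:ℝ) - 1))⁻¹)^2) * (3 * (k:ℝ)^2 * M)
        = 3 * M / ((k:ℝ) - 1)^2 := by
      field_simp
    have hfinal : 3 * M / ((k:ℝ) - 1)^2 ≤ 12 * M / (k:ℝ)^2 := by
      rw [div_le_div_iff₀ (pow_pos hk1 2) (pow_pos hk0 2)]
      nlinarith [mul_nonneg (mul_nonneg hM (by linarith : (0:ℝ) ≤ (k:ℝ) - 2))
        (by linarith : (0:ℝ) ≤ 3 * (k:ℝ) - 2)]
    rw [heq]
    exact hfinal
end
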